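/- Let 0 < r₃ < r₂ be real numbers and let U : [r₃, r₂] → ℝ be twice continuously differentiable with U(r₃) = U(r₂) = 0 and U(r) > 0 for every r ∈ (r₃, r₂). Then there exists r ∈ (r₃, r₂) such that U''(r)/2 + U'(r)/r < 0. -/

import Mathlib

/-- Let `0 < r₃ < r₂` and let `U` be twice continuously differentiable
on `[r₃, r₂]` with `U r₃ = U r₂ = 0` and `U > 0` on `(r₃, r₂)`. Then there is some
`r ∈ (r₃, r₂)` where `U'' r / 2 + U' r / r < 0`, i.e. the strong energy condition
is violated between the two horizons. -/
theorem sec_violated_between_horizons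
    (r₃ r₂ : ℝ) (hr₃ : 0 < r₃) (hlt : r₃ < r₂)
    (U U' U'' : ℝ → ℝ)
    (hU' : ∀ r ∈ Set.Icc r₃ r₂, HasDerivWithinAt U (U' r) (Set.Icc r₃ r₂) r)
    (hU'' : ∀ r ∈ Set.Icc r₃ r₂, HasDerivWithinAt U' (U'' r) (Set.Icc r₃ r₂) r)
    (hU''cont : ContinuousOn U'' (Set.Icc r₃ r₂))
    (h₃ : U r₃ = 0) (h₂ : U r₂ = 0)
    (hpos : ∀ r ∈ Set.Ioo r₃ r₂, 0 < U r) :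
    ∃ r ∈ Set.Ioo r₃ r₂, U'' r / 2 + U' r / r < 0 := by
  by_contra h
  push_neg at h
  set m := (r₃ + r₂) / 2 with hm
  have hm1 : r₃ < m := by simp only [hm]; linarith
  have hm2 : m < r₂ := by simp only [hm]; linarith
  have hUcont : ContinuousOn U (Set.Icc r₃ r₂) :=
    fun x hx => (hU' x hx).continuousWithinAt
  have hU'cont : ContinuousOn U' (Set.Icc r₃ r₂) :=
    fun x hx => (hU'' x hx).continuousWithinAt
  have hUder : ∀ x ∈ Set.Ioo r₃ r₂, HasDerivAt U (U' x) x := fun x hx =>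
    (hU' x (Set.Ioo_subset_Icc_self hx)).hasDerivAt (Icc_mem_nhds hx.1 hx.2)
  have hU'der : ∀ x ∈ Set.Ioo r₃ r₂, HasDerivAt U' (U'' x) x := fun x hx =>
    (hU'' x (Set.Ioo_subset_Icc_self hx)).hasDerivAt (Icc_mem_nhds hx.1 hx.2)
  -- MVT on [r₃, m]: some a with U' a > 0
  obtain ⟨a, ha, hslopea⟩ := exists_hasDerivAt_eq_slope U U' hm1
    (hUcont.mono (Set.Icc_subset_Icc le_rfl hm2.le))
    (fun x hx => hUder x ⟨hx.1, hx.2.trans hm2⟩)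
  -- MVT on [m, r₂]: some b with U' b < 0
  obtain ⟨b, hb, hslopeb⟩ := exists_hasDerivAt_eq_slope U U' hm2
    (hUcont.mono (Set.Icc_subset_Icc hm1.le le_rfl))
    (fun x hx => hUder x ⟨hm1.trans hx.1, hx.2⟩)
  have hUm : 0 < U m := hpos m ⟨hm1, hm2⟩
  have hUa : 0 < U' a := by
    rw [hslopea, h₃]
    apply div_pos <;> linarith
  have hUb : U' b < 0 := by
    rw [hslopeb, h₂]
    apply div_neg_of_neg_of_pos <;> linarith
  have ha0 : 0 < a := lt_trans hr₃ ha.1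
  have haIoo : a ∈ Set.Ioo r₃ r₂ := ⟨ha.1, ha.2.trans hm2⟩
  have hbIoo : b ∈ Set.Ioo r₃ r₂ := ⟨hm1.trans hb.1, hb.2⟩
  have hab : a < b := ha.2.trans hb.1
  -- MVT for g r = r^2 * U' r on [a, b]
  have hgder : ∀ x ∈ Set.Ioo a b,
      HasDerivAt (fun r => r ^ 2 * U' r) (2 * x * U' x + x ^ 2 * U'' x) x := by
    intro x hx
    have hxIoo : x ∈ Set.Ioo r₃ r₂ := ⟨haIoo.1.trans hx.1, hx.2.trans hbIoo.2⟩
    have : HasDerivAt (fun r => r ^ 2 * U' r) (((2:ℕ):ℝ) * x ^ (2 - 1) * U' x + x ^ 2 * U'' x) x :=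
      (hasDerivAt_pow 2 x).mul (hU'der x hxIoo)
    convert this using 1
    push_cast
    ring
  have hgcont : ContinuousOn (fun r => r ^ 2 * U' r) (Set.Icc a b) := by
    apply ContinuousOn.mul (by fun_prop)
    exact hU'cont.mono (Set.Icc_subset_Icc haIoo.1.le hbIoo.2.le)
  obtain ⟨c, hc, hslopec⟩ := exists_hasDerivAt_eq_slope
    (fun r => r ^ 2 * U' r) (fun x => 2 * x * U' x + x ^ 2 * U'' x) hab hgcont hgder
  have hcIoo : c ∈ Set.Ioo r₃ r₂ := ⟨haIoo.1.trans hc.1, hc.2.trans hbIoo.2⟩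
  have hc0 : 0 < c := lt_trans hr₃ hcIoo.1
  -- derivative at c is nonneg by SEC
  have h1 := h c hcIoo
  have h2 : 0 ≤ 2 * c ^ 2 * (U'' c / 2 + U' c / c) :=
    mul_nonneg (by positivity) h1
  have h3 : 2 * c ^ 2 * (U'' c / 2 + U' c / c) = 2 * c * U' c + c ^ 2 * U'' c := by
    field_simp
    ring
  -- but the slope is negative
  have hga : 0 < a ^ 2 * U' a := mul_pos (by positivity) hUa
  have hb0 : 0 < b := lt_trans hr₃ hbIoo.1
  have hgb : b ^ 2 * U' b < 0 := mul_neg_of_pos_of_neg (pow_pos hb0 2) hUb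
  have hslope_neg : (b ^ 2 * U' b - a ^ 2 * U' a) / (b - a) < 0 :=
    div_neg_of_neg_of_pos (by linarith) (by linarith)
  rw [← hslopec] at hslope_neg
  linarith
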